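/- Fix k ∈ ℕ, n ∈ ℕ, and κ ≥ 1. There exists a constant C > 0, depending only on k, n, and κ, with the following property. For every h > 0 and every partition of a bounded interval I ⊂ ℝ into consecutive subintervals I₁, …, I_n whose lengths all lie in [h, κh], every continuous function v : I → ℝ whose restriction to each I_j is a polynomial of degree at most k satisfies ∫_I ∫_I |v(t) − v(s)|² |t−s|^{-2} ds dt ≤ C h^{-1} ∫_I |v(t)|² dt. -/

import Mathlib

open MeasureTheory Set

private lemma invEst_formula (k : ℕ) (a : Fin (k+1) → ℝ) :
    ∫ x in (0:ℝ)..1, (∑ i, a i * x ^ (i:ℕ))^2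
      = ∑ i : Fin (k+1), ∑ j : Fin (k+1), a i * a j * (1 / ((i:ℕ) + (j:ℕ) + 1)) := by
  have hint : ∀ (i j : Fin (k+1)), IntervalIntegrable
      (fun x : ℝ => a i * a j * x ^ ((i:ℕ) + (j:ℕ))) volume 0 1 :=
    fun i j => (intervalIntegral.intervalIntegrable_pow _).const_mul _
  have h1 : ∀ x : ℝ, (∑ i, a i * x ^ (i:ℕ))^2
      = ∑ i : Fin (k+1), ∑ j : Fin (k+1), (a i * a j) * x ^ ((i:ℕ) + (j:ℕ)) := by
    intro x
    rw [sq, Finset.sum_mul_sum]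
    refine Finset.sum_congr rfl fun i _ => Finset.sum_congr rfl fun j _ => ?_
    rw [pow_add]; ring
  simp_rw [h1]
  rw [intervalIntegral.integral_finset_sum (fun i _ =>
    ((by fun_prop : Continuous fun x:ℝ => ∑ j : Fin (k+1),
      a i * a j * x ^ ((i:ℕ)+(j:ℕ)))).intervalIntegrable 0 1)]
  refine Finset.sum_congr rfl fun i _ => ?_
  rw [intervalIntegral.integral_finset_sum (fun j _ => hint i j)]
  refine Finset.sum_congr rfl fun j _ => ?_
  rw [intervalIntegral.integral_const_mul, integral_pow]
  push_cast
  ring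

private lemma invEst_pos (k : ℕ) (a : Fin (k+1) → ℝ) (ha : a ≠ 0) :
    0 < ∫ x in (0:ℝ)..1, (∑ i, a i * x ^ (i:ℕ))^2 := by
  set p : Polynomial ℝ := ∑ i : Fin (k+1), Polynomial.C (a i) * Polynomial.X ^ (i:ℕ) with hp
  have hev : ∀ x : ℝ, p.eval x = ∑ i, a i * x ^ (i:ℕ) := by
    intro x; simp [hp, Polynomial.eval_finset_sum]
  have hpne : p ≠ 0 := by
    obtain ⟨i, hi⟩ := Function.ne_iff.mp ha
    intro h0
    apply hi
    have : p.coeff (i:ℕ) = a i := by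
      simp only [hp, Polynomial.finset_sum_coeff, Polynomial.coeff_C_mul,
        Polynomial.coeff_X_pow]
      rw [Finset.sum_eq_single i]
      · simp
      · intro j _ hj
        simp only [Fin.val_eq_val]
        rw [if_neg (Ne.symm hj), mul_zero]
      · simp
    rw [h0] at this
    simpa using this.symm
  have hg : Continuous fun x : ℝ => (p.eval x)^2 := by continuity
  have hint : IntervalIntegrable (fun x : ℝ => (p.eval x)^2) volume 0 1 :=
    hg.intervalIntegrable 0 1
  have hpos : 0 < ∫ x in (0:ℝ)..1, (p.eval x)^2 := by
    rw [intervalIntegral.integral_pos_iff_support_of_nonneg_ae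
      (Filter.Eventually.of_forall fun x => sq_nonneg _) hint]
    refine ⟨one_pos, ?_⟩
    have hroots : ({x : ℝ | p.IsRoot x}).Finite := p.finite_setOf_isRoot hpne
    have hnull : volume (Ioc (0:ℝ) 1 \ Function.support fun x => (p.eval x)^2) = 0 := by
      refine measure_mono_null ?_ (hroots.measure_zero volume)
      intro x hx
      have := hx.2
      simp only [Function.mem_support, ne_eq, not_not] at this
      simpa [Polynomial.IsRoot] using pow_eq_zero_iff (n := 2) (by norm_num) |>.mp this
    have hle := measure_le_inter_add_diff volume (Ioc (0:ℝ) 1)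
      (Function.support fun x => (p.eval x)^2)
    rw [hnull, add_zero, Real.volume_Ioc] at hle
    have : 0 < volume (Ioc (0:ℝ) 1 ∩ Function.support fun x => (p.eval x)^2) := by
      refine lt_of_lt_of_le ?_ hle
      simp
    rwa [inter_comm] at this
  simpa [hev] using hpos

private lemma invEst_coeff_bound (k : ℕ) : ∃ ε : ℝ, 0 < ε ∧ ∀ a : Fin (k+1) → ℝ,
    ε * ‖a‖^2 ≤ ∫ x in (0:ℝ)..1, (∑ i, a i * x ^ (i:ℕ))^2 := by
  set F : (Fin (k+1) → ℝ) → ℝ :=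
    fun a => ∑ i : Fin (k+1), ∑ j : Fin (k+1), a i * a j * (1 / ((i:ℕ) + (j:ℕ) + 1)) with hF
  have hFc : Continuous F := by
    apply continuous_finset_sum; intro i _
    apply continuous_finset_sum; intro j _
    exact ((continuous_apply i).mul (continuous_apply j)).mul continuous_const
  have hsph : IsCompact (Metric.sphere (0 : Fin (k+1) → ℝ) 1) := isCompact_sphere 0 1
  have hne : (Metric.sphere (0 : Fin (k+1) → ℝ) 1).Nonempty :=
    NormedSpace.sphere_nonempty.mpr zero_le_one
  obtain ⟨a₀, ha₀, hmin⟩ := hsph.exists_isMinOn hne hFc.continuousOn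
  have ha₀1 : ‖a₀‖ = 1 := by simpa using ha₀
  have ha₀ne : a₀ ≠ 0 := by intro h; rw [h] at ha₀1; simp at ha₀1
  have hε : 0 < F a₀ := by
    have := invEst_pos k a₀ ha₀ne
    rwa [invEst_formula] at this
  refine ⟨F a₀, hε, fun a => ?_⟩
  rcases eq_or_ne a 0 with rfl | hane
  · simp [invEst_formula, hF]
  · have hna : (0:ℝ) < ‖a‖ := norm_pos_iff.mpr hane
    set u : Fin (k+1) → ℝ := ‖a‖⁻¹ • a with hu
    have hu1 : ‖u‖ = 1 := by
      rw [hu, norm_smul, norm_inv, norm_norm, inv_mul_cancel₀ hna.ne']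
    have hau : a = ‖a‖ • u := by
      rw [hu, smul_smul, mul_inv_cancel₀ hna.ne', one_smul]
    have hhom0 : ∀ (c : ℝ) (b : Fin (k+1) → ℝ), F (c • b) = c^2 * F b := by
      intro c b
      simp only [hF, Pi.smul_apply, smul_eq_mul, Finset.mul_sum]
      refine Finset.sum_congr rfl fun i _ => Finset.sum_congr rfl fun j _ => ?_
      ring
    have hhom : F a = ‖a‖^2 * F u := by
      conv_lhs => rw [hau]
      exact hhom0 _ _
    have humem : u ∈ Metric.sphere (0 : Fin (k+1) → ℝ) 1 := by simpa using hu1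
    have := hmin humem
    rw [invEst_formula]
    show F a₀ * ‖a‖^2 ≤ F a
    rw [hhom]
    have h2 : (0:ℝ) ≤ ‖a‖^2 := sq_nonneg _
    calc F a₀ * ‖a‖^2 ≤ F u * ‖a‖^2 := mul_le_mul_of_nonneg_right this h2
      _ = ‖a‖^2 * F u := by ring

private lemma invEst_pow_sub (i : ℕ) {x y : ℝ} (hx : x ∈ Icc (0:ℝ) 1)
    (hy : y ∈ Icc (0:ℝ) 1) : |x^i - y^i| ≤ i * |x - y| := by
  induction i with
  | zero => simp
  | succ i ih =>
    have h1 : x^(i+1) - y^(i+1) = x*(x^i - y^i) + y^i*(x-y) := by ring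
    have hxa : |x| ≤ 1 := abs_le.mpr ⟨by linarith [hx.1], hx.2⟩
    have hya : |y^i| ≤ 1 := by
      rw [abs_pow]
      exact pow_le_one₀ (abs_nonneg _) (abs_le.mpr ⟨by linarith [hy.1], hy.2⟩)
    calc |x^(i+1) - y^(i+1)| = |x*(x^i - y^i) + y^i*(x-y)| := by rw [h1]
      _ ≤ |x*(x^i - y^i)| + |y^i*(x-y)| := abs_add_le _ _
      _ = |x| * |x^i - y^i| + |y^i| * |x-y| := by rw [abs_mul, abs_mul]
      _ ≤ 1 * (i * |x-y|) + 1 * |x-y| :=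
          add_le_add (mul_le_mul hxa ih (abs_nonneg _) zero_le_one)
            (mul_le_mul_of_nonneg_right hya (abs_nonneg _))
      _ = (↑(i+1)) * |x - y| := by push_cast; ring

private lemma invEst_ref (k : ℕ) : ∃ C : ℝ, 0 < C ∧ ∀ p : Polynomial ℝ, p.natDegree ≤ k →
    ∀ x ∈ Icc (0:ℝ) 1, ∀ y ∈ Icc (0:ℝ) 1,
    (p.eval x - p.eval y)^2 ≤ C * (x - y)^2 * ∫ u in (0:ℝ)..1, (p.eval u)^2 := by
  obtain ⟨ε, hε, hεb⟩ := invEst_coeff_bound k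
  refine ⟨(k+1)^4 * ε⁻¹, by positivity, fun p hp x hx y hy => ?_⟩
  set a : Fin (k+1) → ℝ := fun i => p.coeff i with ha
  have hev : ∀ z : ℝ, p.eval z = ∑ i, a i * z ^ (i:ℕ) := by
    intro z
    rw [Polynomial.eval_eq_sum_range' (Nat.lt_succ_of_le hp),
      Finset.sum_range fun i => p.coeff i * z ^ i]
  have hIz : 0 ≤ ∫ u in (0:ℝ)..1, (p.eval u)^2 :=
    intervalIntegral.integral_nonneg zero_le_one (fun u _ => sq_nonneg _)
  have hna : ‖a‖^2 ≤ ε⁻¹ * ∫ u in (0:ℝ)..1, (p.eval u)^2 := by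
    have := hεb a
    simp_rw [← hev] at this
    have h2 := mul_le_mul_of_nonneg_left this (inv_nonneg.mpr hε.le)
    rw [← mul_assoc, inv_mul_cancel₀ hε.ne', one_mul] at h2
    exact h2
  have hdiff : |p.eval x - p.eval y| ≤ (k+1)^2 * ‖a‖ * |x - y| := by
    have h1 : p.eval x - p.eval y = ∑ i : Fin (k+1), a i * (x ^ (i:ℕ) - y ^ (i:ℕ)) := by
      rw [hev, hev, ← Finset.sum_sub_distrib]
      exact Finset.sum_congr rfl fun i _ => by ring
    rw [h1]
    calc |∑ i : Fin (k+1), a i * (x ^ (i:ℕ) - y ^ (i:ℕ))|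
        ≤ ∑ i : Fin (k+1), |a i * (x ^ (i:ℕ) - y ^ (i:ℕ))| := Finset.abs_sum_le_sum_abs _ _
      _ ≤ ∑ i : Fin (k+1), ‖a‖ * ((k+1) * |x - y|) := by
          refine Finset.sum_le_sum fun i _ => ?_
          rw [abs_mul]
          have hai : |a i| ≤ ‖a‖ := by
            simpa using norm_le_pi_norm a i
          have h2 : |x ^ (i:ℕ) - y ^ (i:ℕ)| ≤ (k+1) * |x - y| := by
            refine (invEst_pow_sub (i:ℕ) hx hy).trans ?_
            have hik : ((i:ℕ):ℝ) ≤ (k:ℝ)+1 := by exact_mod_cast le_of_lt i.isLt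
            exact mul_le_mul_of_nonneg_right hik (abs_nonneg _)
          exact mul_le_mul hai h2 (abs_nonneg _) (norm_nonneg _)
      _ = (k+1) * (‖a‖ * ((k+1) * |x - y|)) := by
          rw [Finset.sum_const, Finset.card_univ, Fintype.card_fin]
          ring
      _ = (k+1)^2 * ‖a‖ * |x - y| := by ring
  have hsq : (p.eval x - p.eval y)^2 ≤ ((k+1)^2 * ‖a‖ * |x - y|)^2 := by
    rw [← sq_abs (p.eval x - p.eval y)]
    exact pow_le_pow_left₀ (abs_nonneg _) hdiff 2
  calc (p.eval x - p.eval y)^2 ≤ ((k+1)^2 * ‖a‖ * |x - y|)^2 := hsq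
    _ = (k+1)^4 * ‖a‖^2 * (x-y)^2 := by rw [mul_pow, mul_pow, sq_abs]; ring
    _ ≤ (k+1)^4 * (ε⁻¹ * ∫ u in (0:ℝ)..1, (p.eval u)^2) * (x-y)^2 := by
        gcongr
    _ = (k+1)^4 * ε⁻¹ * (x - y)^2 * ∫ u in (0:ℝ)..1, (p.eval u)^2 := by ring

private lemma invEst_scaled (k : ℕ) : ∃ C : ℝ, 0 < C ∧ ∀ p : Polynomial ℝ, p.natDegree ≤ k →
    ∀ a b : ℝ, a < b → ∀ x ∈ Icc a b, ∀ y ∈ Icc a b,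
    (p.eval x - p.eval y)^2
      ≤ C * ((b-a)^3)⁻¹ * (x - y)^2 * ∫ u in a..b, (p.eval u)^2 := by
  obtain ⟨C, hC, href⟩ := invEst_ref k
  refine ⟨C, hC, fun p hp a b hab x hx y hy => ?_⟩
  have hba : (0:ℝ) < b - a := by linarith
  set q : Polynomial ℝ := p.comp (Polynomial.C (b-a) * Polynomial.X + Polynomial.C a) with hq
  have hqdeg : q.natDegree ≤ k := by
    refine (Polynomial.natDegree_comp_le).trans ?_
    calc p.natDegree * (Polynomial.C (b-a) * Polynomial.X + Polynomial.C a).natDegree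
        ≤ k * 1 := Nat.mul_le_mul hp Polynomial.natDegree_linear_le
      _ = k := mul_one k
  have hqev : ∀ u : ℝ, q.eval u = p.eval ((b-a) * u + a) := by
    intro u; simp [hq, Polynomial.eval_comp]
  have hqint : ∫ u in (0:ℝ)..1, (q.eval u)^2 = (b-a)⁻¹ * ∫ u in a..b, (p.eval u)^2 := by
    simp_rw [hqev]
    have := intervalIntegral.integral_comp_mul_add (a := (0:ℝ)) (b := 1)
      (f := fun z => (p.eval z)^2) (c := b-a) hba.ne' a
    simpa using this
  set ux := (x - a) / (b - a) with hux
  set uy := (y - a) / (b - a) with huy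
  have hmem : ∀ z, z ∈ Icc a b → (z - a)/(b-a) ∈ Icc (0:ℝ) 1 := by
    intro z hz
    constructor
    · exact div_nonneg (by linarith [hz.1]) hba.le
    · rw [div_le_one hba]; linarith [hz.2]
  have hxev : q.eval ux = p.eval x := by
    rw [hqev, hux]; congr 1; field_simp; ring
  have hyev : q.eval uy = p.eval y := by
    rw [hqev, huy]; congr 1; field_simp; ring
  have key := href q hqdeg ux (hmem x hx) uy (hmem y hy)
  rw [hxev, hyev, hqint] at key
  have hd : ux - uy = (x - y)/(b-a) := by rw [hux, huy]; ring
  rw [hd] at key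
  calc (p.eval x - p.eval y)^2
      ≤ C * ((x-y)/(b-a))^2 * ((b-a)⁻¹ * ∫ u in a..b, (p.eval u)^2) := key
    _ = C * ((b-a)^3)⁻¹ * (x - y)^2 * ∫ u in a..b, (p.eval u)^2 := by
        rw [div_eq_mul_inv, ← inv_pow]
        ring

/-- One-dimensional inverse estimate underlying Lemma 4.8 ('Inverse
estimate'): for continuous piecewise polynomials of degree at most `k` on a
quasi-uniform partition `t 0 < t 1 < ⋯ < t n` of a bounded interval (all
subinterval lengths in `[h, κh]`), the `H^{1/2}` Sobolev–Slobodeckij seminorm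
squared is bounded by `C h⁻¹` times the squared `L²` norm, with `C` depending
only on `k`, `n`, `κ`. -/
theorem stmt_8 (k n : ℕ) (κ : ℝ) (hκ : 1 ≤ κ) :
    ∃ C : ℝ, 0 < C ∧
      ∀ h : ℝ, 0 < h →
        ∀ t : ℕ → ℝ,
          (∀ j < n, h ≤ t (j + 1) - t j ∧ t (j + 1) - t j ≤ κ * h) →
          ∀ v : ℝ → ℝ, ContinuousOn v (Icc (t 0) (t n)) →
            (∀ j < n, ∃ p : Polynomial ℝ, p.natDegree ≤ k ∧
              ∀ x ∈ Icc (t j) (t (j + 1)), v x = p.eval x) →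
            (∫⁻ x in Icc (t 0) (t n), ∫⁻ s in Icc (t 0) (t n),
                ENNReal.ofReal ((v x - v s) ^ 2 / (x - s) ^ 2))
              ≤ ENNReal.ofReal (C / h) *
                  ∫⁻ x in Icc (t 0) (t n), ENNReal.ofReal (v x ^ 2) := by
  obtain ⟨C₃, hC₃, hscaled⟩ := invEst_scaled k
  refine ⟨C₃ * (n * κ)^2 + 1, by positivity, fun h hh t ht v hv hvp => ?_⟩
  rcases Nat.eq_zero_or_pos n with rfl | hn
  · -- degenerate case: the interval is a single point
    have h0 : volume (Icc (t 0) (t 0)) = 0 := by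
      rw [Real.volume_Icc, sub_self]; simp
    rw [setLIntegral_measure_zero _ _ h0]
    exact zero_le
  -- basic facts about the partition
  have hstep : ∀ j, j < n → t j < t (j+1) := fun j hj => by
    have := (ht j hj).1; linarith
  have hmono : ∀ i j, i ≤ j → j ≤ n → t i ≤ t j := by
    intro i j hij hjn
    induction j with
    | zero => interval_cases i; rfl
    | succ j ih =>
      rcases Nat.eq_or_lt_of_le hij with rfl | hlt
      · rfl
      · exact (ih (Nat.lt_succ_iff.mp hlt) (by omega)).trans (hstep j (by omega)).le
  have h0n : t 0 ≤ t n := hmono 0 n (Nat.zero_le n) le_rfl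
  have hlen : t n - t 0 ≤ n * (κ * h) := by
    have htel : ∑ j ∈ Finset.range n, (t (j+1) - t j) = t n - t 0 :=
      Finset.sum_range_sub t n
    rw [← htel]
    calc ∑ j ∈ Finset.range n, (t (j+1) - t j)
        ≤ ∑ _j ∈ Finset.range n, κ * h :=
          Finset.sum_le_sum fun j hj => (ht j (Finset.mem_range.mp hj)).2
      _ = n * (κ * h) := by rw [Finset.sum_const, Finset.card_range]; simp [nsmul_eq_mul]
  -- the L² quantity
  set S : ℝ := ∫ x in Icc (t 0) (t n), (v x)^2 with hS
  have hv2c : ContinuousOn (fun x => (v x)^2) (Icc (t 0) (t n)) := hv.pow 2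
  have hv2i : IntegrableOn (fun x => (v x)^2) (Icc (t 0) (t n)) volume :=
    hv2c.integrableOn_compact isCompact_Icc
  have hSnn : 0 ≤ S := setIntegral_nonneg measurableSet_Icc fun x _ => sq_nonneg _
  set K : ℝ := C₃ * (h^3)⁻¹ * S with hK
  have hKnn : 0 ≤ K := by positivity
  set B : ℝ := Real.sqrt K with hB
  have hBnn : 0 ≤ B := Real.sqrt_nonneg _
  -- per-piece Lipschitz estimate
  have hpiece : ∀ j, j < n → ∀ x ∈ Icc (t j) (t (j+1)), ∀ y ∈ Icc (t j) (t (j+1)),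
      |v x - v y| ≤ B * |x - y| := by
    intro j hj x hx y hy
    obtain ⟨p, hpd, hpv⟩ := hvp j hj
    have hsub : Icc (t j) (t (j+1)) ⊆ Icc (t 0) (t n) :=
      Icc_subset_Icc (hmono 0 j (Nat.zero_le j) (by omega)) (hmono (j+1) n hj le_rfl)
    have hIp : ∫ u in (t j)..(t (j+1)), (p.eval u)^2
        = ∫ u in Icc (t j) (t (j+1)), (v u)^2 := by
      rw [intervalIntegral.integral_of_le (hstep j hj).le, ← integral_Icc_eq_integral_Ioc]
      exact setIntegral_congr_fun measurableSet_Icc fun u hu => by rw [hpv u hu]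
    have hIple : ∫ u in Icc (t j) (t (j+1)), (v u)^2 ≤ S := by
      refine setIntegral_mono_set hv2i ?_ (HasSubset.Subset.eventuallyLE hsub)
      exact Filter.Eventually.of_forall fun x => sq_nonneg _
    have hkey := hscaled p hpd (t j) (t (j+1)) (hstep j hj) x hx y hy
    rw [← hpv x hx, ← hpv y hy] at hkey
    have hlb : (h^3)⁻¹ ≥ ((t (j+1) - t j)^3)⁻¹ := by
      have h1 : h^3 ≤ (t (j+1) - t j)^3 :=
        pow_le_pow_left₀ hh.le (ht j hj).1 3
      exact inv_anti₀ (by positivity) h1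
    have hsql : (v x - v y)^2 ≤ K * (x - y)^2 := by
      calc (v x - v y)^2
          ≤ C₃ * ((t (j+1) - t j)^3)⁻¹ * (x - y)^2
              * ∫ u in (t j)..(t (j+1)), (p.eval u)^2 := hkey
        _ ≤ C₃ * (h^3)⁻¹ * (x - y)^2 * ∫ u in (t j)..(t (j+1)), (p.eval u)^2 := by
            have hInn : 0 ≤ ∫ u in (t j)..(t (j+1)), (p.eval u)^2 :=
              intervalIntegral.integral_nonneg (hstep j hj).le fun u _ => sq_nonneg _
            gcongr
        _ ≤ C₃ * (h^3)⁻¹ * (x - y)^2 * S := by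
            rw [hIp]
            have : (0:ℝ) ≤ C₃ * (h^3)⁻¹ * (x - y)^2 := by positivity
            exact mul_le_mul_of_nonneg_left hIple this
        _ = K * (x - y)^2 := by rw [hK]; ring
    have := Real.sqrt_le_sqrt hsql
    rwa [Real.sqrt_sq_eq_abs, Real.sqrt_mul hKnn, Real.sqrt_sq_eq_abs, ← hB] at this
  -- glue the Lipschitz estimates
  have hglue : ∀ m, m ≤ n → ∀ x ∈ Icc (t 0) (t m), ∀ y ∈ Icc (t 0) (t m),
      |v x - v y| ≤ B * |x - y| := by
    intro m
    induction m with
    | zero =>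
      intro _ x hx y hy
      have hx' : x = t 0 := le_antisymm hx.2 hx.1
      have hy' : y = t 0 := le_antisymm hy.2 hy.1
      rw [hx', hy']
      simp
    | succ m ih =>
      intro hm x hx y hy
      have hmn : m < n := by omega
      have htm0 : t 0 ≤ t m := hmono 0 m (Nat.zero_le m) (by omega)
      have htm1 : t m ≤ t (m+1) := (hstep m hmn).le
      -- helper: estimate through the breakpoint t m
      have hcross : ∀ z w, z ∈ Icc (t 0) (t (m+1)) → w ∈ Icc (t 0) (t (m+1)) →
          z ≤ t m → t m ≤ w → |v z - v w| ≤ B * |z - w| := by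
        intro z w hz hw hzm hmw
        have h1 : |v z - v (t m)| ≤ B * |z - t m| :=
          ih (by omega) z ⟨hz.1, hzm⟩ (t m) ⟨htm0, le_rfl⟩
        have h2 : |v (t m) - v w| ≤ B * |t m - w| :=
          hpiece m hmn (t m) ⟨le_rfl, htm1⟩ w ⟨hmw, hw.2⟩
        calc |v z - v w| = |(v z - v (t m)) + (v (t m) - v w)| := by ring_nf
          _ ≤ |v z - v (t m)| + |v (t m) - v w| := abs_add_le _ _
          _ ≤ B * |z - t m| + B * |t m - w| := add_le_add h1 h2
          _ = B * (t m - z) + B * (w - t m) := by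
              rw [abs_of_nonpos (by linarith), abs_of_nonpos (by linarith)]
              ring
          _ = B * (w - z) := by ring
          _ = B * |z - w| := by rw [abs_of_nonpos (by linarith : z - w ≤ 0)]; ring
      rcases le_total x (t m) with hxm | hxm <;> rcases le_total y (t m) with hym | hym
      · exact ih (by omega) x ⟨hx.1, hxm⟩ y ⟨hy.1, hym⟩
      · exact hcross x y hx hy hxm hym
      · rw [abs_sub_comm (v x) (v y), abs_sub_comm x y]
        exact hcross y x hy hx hym hxm
      · exact hpiece m hmn x ⟨hxm, hx.2⟩ y ⟨hym, hy.2⟩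
  have hlip := hglue n le_rfl
  -- pointwise bound on the Slobodeckij integrand
  have hpt : ∀ x ∈ Icc (t 0) (t n), ∀ s ∈ Icc (t 0) (t n),
      (v x - v s)^2 / (x - s)^2 ≤ K := by
    intro x hx s hs
    rcases eq_or_ne x s with rfl | hxs
    · simpa using hKnn
    · have hx2 : (0:ℝ) < (x - s)^2 := by
        have : x - s ≠ 0 := sub_ne_zero.mpr hxs
        positivity
      rw [div_le_iff₀ hx2]
      have h1 := hlip x hx s hs
      have h2 : (v x - v s)^2 ≤ (B * |x - s|)^2 := by
        rw [← sq_abs (v x - v s)]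
        exact pow_le_pow_left₀ (abs_nonneg _) h1 2
      calc (v x - v s)^2 ≤ (B * |x - s|)^2 := h2
        _ = B^2 * (x - s)^2 := by rw [mul_pow, sq_abs]
        _ = K * (x - s)^2 := by rw [hB, Real.sq_sqrt hKnn]
  -- bound the double integral by a constant
  have hinner : ∀ x ∈ Icc (t 0) (t n),
      (∫⁻ s in Icc (t 0) (t n), ENNReal.ofReal ((v x - v s) ^ 2 / (x - s) ^ 2))
        ≤ ENNReal.ofReal K * volume (Icc (t 0) (t n)) := by
    intro x hx
    calc (∫⁻ s in Icc (t 0) (t n), ENNReal.ofReal ((v x - v s) ^ 2 / (x - s) ^ 2))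
        ≤ ∫⁻ _s in Icc (t 0) (t n), ENNReal.ofReal K :=
          setLIntegral_mono measurable_const fun s hs =>
            ENNReal.ofReal_le_ofReal (hpt x hx s hs)
      _ = ENNReal.ofReal K * volume (Icc (t 0) (t n)) := setLIntegral_const _ _
  have houter : (∫⁻ x in Icc (t 0) (t n), ∫⁻ s in Icc (t 0) (t n),
        ENNReal.ofReal ((v x - v s) ^ 2 / (x - s) ^ 2))
      ≤ ENNReal.ofReal K * volume (Icc (t 0) (t n)) * volume (Icc (t 0) (t n)) := by
    calc (∫⁻ x in Icc (t 0) (t n), ∫⁻ s in Icc (t 0) (t n),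
          ENNReal.ofReal ((v x - v s) ^ 2 / (x - s) ^ 2))
        ≤ ∫⁻ _x in Icc (t 0) (t n), ENNReal.ofReal K * volume (Icc (t 0) (t n)) :=
          setLIntegral_mono measurable_const hinner
      _ = ENNReal.ofReal K * volume (Icc (t 0) (t n)) * volume (Icc (t 0) (t n)) :=
          setLIntegral_const _ _
  -- convert the right-hand side
  have hRHS : (∫⁻ x in Icc (t 0) (t n), ENNReal.ofReal (v x ^ 2)) = ENNReal.ofReal S := by
    rw [hS, ofReal_integral_eq_lintegral_ofReal hv2i
      (Filter.Eventually.of_forall fun x => sq_nonneg _)]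
  rw [hRHS]
  refine houter.trans ?_
  rw [Real.volume_Icc]
  have hlen' : (0:ℝ) ≤ t n - t 0 := by linarith
  rw [← ENNReal.ofReal_mul hKnn, ← ENNReal.ofReal_mul (mul_nonneg hKnn hlen'),
    ← ENNReal.ofReal_mul (by positivity)]
  refine ENNReal.ofReal_le_ofReal ?_
  have hnk : (0:ℝ) ≤ n * (κ * h) := by positivity
  calc K * (t n - t 0) * (t n - t 0)
      ≤ K * (n * (κ * h)) * (n * (κ * h)) := by gcongr
    _ = C₃ * (n * κ)^2 * (S / h) := by
        rw [hK]
        field_simp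
    _ ≤ (C₃ * (n * κ)^2 + 1) * (S / h) :=
        mul_le_mul_of_nonneg_right (by linarith) (div_nonneg hSnn hh.le)
    _ = (C₃ * (n * κ)^2 + 1) / h * S := by ring
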